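/- Let K ∈ ℝ^{n_u×n_x} and b ∈ ℝ^{n_u} be given, assume 𝕊 is nonempty, and suppose the terminal set 𝔽 satisfies: every element of 𝔽 is of the form (x, Y𝕊 + y) with x ∈ 𝕏 and (Y, y) ∈ 𝕐, and for every (x, Y𝕊 + y) ∈ 𝔽 with (Y, y) ∈ 𝕐 one has K x + b ∈ 𝕌 and, for every s ∈ 𝕊, ((A + B K) x + B b + E(Y s + y), Y𝕊 + y) ∈ 𝔽 (i.e., 𝔽 is adjustable positive invariant for the closed loop u = K x + b with the successor uncertainty set equal to the current one). Let N ≥ 1 and let x be affinely feasible with horizon N and terminal set 𝔽, witnessed by a solution with first-stage input p_0 and first pair (Y_0, y_0). Then for every s_0 ∈ 𝕊, the successor state A x + B p_0 + E(Y_0 s_0 + y_0) is affinely feasible with horizon N and terminal set 𝔽. -/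

import Mathlib

/-- The polytope `𝕊 = {s : G s ≤ g}` (componentwise inequality). -/
def poly {l ns : ℕ} (G : Matrix (Fin l) (Fin ns) ℝ) (gv : Fin l → ℝ) :
    Set (Fin ns → ℝ) :=
  {s | G.mulVec s ≤ gv}

/-- The uncertainty set `Y 𝕊 + y = {Y s + y : s ∈ 𝕊}`. -/
def affSet {nw ns : ℕ} (Y : Matrix (Fin nw) (Fin ns) ℝ) (y : Fin nw → ℝ)
    (S : Set (Fin ns → ℝ)) : Set (Fin nw → ℝ) :=
  (fun s => Y.mulVec s + y) '' S

/-- The affine disturbance feedback input `u_k(s) = p_k + ∑_{j<k} P_{k,j} s_j`. -/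
def affInput {nu ns : ℕ} (p : ℕ → Fin nu → ℝ) (P : ℕ → ℕ → Matrix (Fin nu) (Fin ns) ℝ)
    (s : ℕ → Fin ns → ℝ) (k : ℕ) : Fin nu → ℝ :=
  p k + ∑ j ∈ Finset.range k, (P k j).mulVec (s j)

/-- Trajectory `x_0(s) = x`, `x_{k+1}(s) = A x_k(s) + B u_k(s) + E (Y_k s_k + y_k)`
under the affine disturbance feedback policy. -/
def affTraj {nx nu nw ns : ℕ} (A : Matrix (Fin nx) (Fin nx) ℝ)
    (B : Matrix (Fin nx) (Fin nu) ℝ) (E : Matrix (Fin nx) (Fin nw) ℝ)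
    (p : ℕ → Fin nu → ℝ) (P : ℕ → ℕ → Matrix (Fin nu) (Fin ns) ℝ)
    (Ym : ℕ → Matrix (Fin nw) (Fin ns) ℝ) (yv : ℕ → Fin nw → ℝ)
    (x : Fin nx → ℝ) (s : ℕ → Fin ns → ℝ) : ℕ → Fin nx → ℝ
  | 0 => x
  | k + 1 =>
      A.mulVec (affTraj A B E p P Ym yv x s k) + B.mulVec (affInput p P s k) +
        E.mulVec ((Ym k).mulVec (s k) + yv k)

/-- `(p, P, Y, y)` is an affine disturbance feedback solution over horizon `N` at state
`x`: the uncertainty parameters are admissible, and for every primitive sequence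
`s ∈ 𝕊^N` the state and input constraints hold along the horizon and the terminal pair
`(x_N(s), Y_{N-1} 𝕊 + y_{N-1})` lies in `F`. -/
def AffSol {nx nu nw ns : ℕ} (A : Matrix (Fin nx) (Fin nx) ℝ)
    (B : Matrix (Fin nx) (Fin nu) ℝ) (E : Matrix (Fin nx) (Fin nw) ℝ)
    (X : Set (Fin nx → ℝ)) (U : Set (Fin nu → ℝ)) (S : Set (Fin ns → ℝ))
    (Ys : Set (Matrix (Fin nw) (Fin ns) ℝ × (Fin nw → ℝ)))
    (F : Set ((Fin nx → ℝ) × Set (Fin nw → ℝ))) (N : ℕ) (x : Fin nx → ℝ)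
    (p : ℕ → Fin nu → ℝ) (P : ℕ → ℕ → Matrix (Fin nu) (Fin ns) ℝ)
    (Ym : ℕ → Matrix (Fin nw) (Fin ns) ℝ) (yv : ℕ → Fin nw → ℝ) : Prop :=
  (∀ k, k < N → (Ym k, yv k) ∈ Ys) ∧
  ∀ s : ℕ → Fin ns → ℝ, (∀ k, k < N → s k ∈ S) →
    (∀ k, k < N → affTraj A B E p P Ym yv x s k ∈ X ∧ affInput p P s k ∈ U) ∧
    (affTraj A B E p P Ym yv x s N, affSet (Ym (N - 1)) (yv (N - 1)) S) ∈ F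

/-- `x` is affinely feasible with horizon `N` and terminal set `F`. -/
def AffFeasible {nx nu nw ns : ℕ} (A : Matrix (Fin nx) (Fin nx) ℝ)
    (B : Matrix (Fin nx) (Fin nu) ℝ) (E : Matrix (Fin nx) (Fin nw) ℝ)
    (X : Set (Fin nx → ℝ)) (U : Set (Fin nu → ℝ)) (S : Set (Fin ns → ℝ))
    (Ys : Set (Matrix (Fin nw) (Fin ns) ℝ × (Fin nw → ℝ)))
    (F : Set ((Fin nx → ℝ) × Set (Fin nw → ℝ))) (N : ℕ) (x : Fin nx → ℝ) : Prop :=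
  ∃ (p : ℕ → Fin nu → ℝ) (P : ℕ → ℕ → Matrix (Fin nu) (Fin ns) ℝ)
    (Ym : ℕ → Matrix (Fin nw) (Fin ns) ℝ) (yv : ℕ → Fin nw → ℝ),
    AffSol A B E X U S Ys F N x p P Ym yv


namespace SuccAux

variable {nx nu nw ns : ℕ}

lemma mulVec_sum {m n : ℕ} (A : Matrix (Fin m) (Fin n) ℝ) {ι : Type*} (t : Finset ι)
    (f : ι → Fin n → ℝ) :
    A.mulVec (∑ i ∈ t, f i) = ∑ i ∈ t, A.mulVec (f i) := by
  simpa only [Matrix.mulVecLin_apply] using map_sum A.mulVecLin f t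

/-- constant part of the trajectory -/
def trajC (A : Matrix (Fin nx) (Fin nx) ℝ) (B : Matrix (Fin nx) (Fin nu) ℝ)
    (E : Matrix (Fin nx) (Fin nw) ℝ) (p : ℕ → Fin nu → ℝ) (yv : ℕ → Fin nw → ℝ)
    (x : Fin nx → ℝ) : ℕ → Fin nx → ℝ
  | 0 => x
  | k + 1 => A.mulVec (trajC A B E p yv x k) + B.mulVec (p k) + E.mulVec (yv k)

/-- linear part of the trajectory -/
def trajM (A : Matrix (Fin nx) (Fin nx) ℝ) (B : Matrix (Fin nx) (Fin nu) ℝ)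
    (E : Matrix (Fin nx) (Fin nw) ℝ) (P : ℕ → ℕ → Matrix (Fin nu) (Fin ns) ℝ)
    (Ym : ℕ → Matrix (Fin nw) (Fin ns) ℝ) : ℕ → ℕ → Matrix (Fin nx) (Fin ns) ℝ
  | 0, _ => 0
  | k + 1, j => if j = k then E * Ym k else A * trajM A B E P Ym k j + B * P k j

lemma trajC_congr {A : Matrix (Fin nx) (Fin nx) ℝ} {B : Matrix (Fin nx) (Fin nu) ℝ}
    {E : Matrix (Fin nx) (Fin nw) ℝ} {p q : ℕ → Fin nu → ℝ} {yv : ℕ → Fin nw → ℝ}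
    {x : Fin nx → ℝ} {n : ℕ} (h : ∀ k < n, p k = q k) :
    trajC A B E p yv x n = trajC A B E q yv x n := by
  induction n with
  | zero => rfl
  | succ n ih =>
    simp only [trajC, ih (fun k hk => h k (by omega)), h n (by omega)]

lemma trajM_congr {A : Matrix (Fin nx) (Fin nx) ℝ} {B : Matrix (Fin nx) (Fin nu) ℝ}
    {E : Matrix (Fin nx) (Fin nw) ℝ} {P Q : ℕ → ℕ → Matrix (Fin nu) (Fin ns) ℝ}
    {Ym : ℕ → Matrix (Fin nw) (Fin ns) ℝ} {n : ℕ} (h : ∀ k < n, P k = Q k) (j : ℕ) :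
    trajM A B E P Ym n j = trajM A B E Q Ym n j := by
  induction n generalizing j with
  | zero => rfl
  | succ n ih =>
    simp only [trajM, ih (fun k hk => h k (by omega)), h n (by omega)]

lemma affTraj_eq (A : Matrix (Fin nx) (Fin nx) ℝ) (B : Matrix (Fin nx) (Fin nu) ℝ)
    (E : Matrix (Fin nx) (Fin nw) ℝ) (p : ℕ → Fin nu → ℝ)
    (P : ℕ → ℕ → Matrix (Fin nu) (Fin ns) ℝ) (Ym : ℕ → Matrix (Fin nw) (Fin ns) ℝ)
    (yv : ℕ → Fin nw → ℝ) (x : Fin nx → ℝ) (s : ℕ → Fin ns → ℝ) (k : ℕ) :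
    affTraj A B E p P Ym yv x s k =
      trajC A B E p yv x k + ∑ j ∈ Finset.range k, (trajM A B E P Ym k j).mulVec (s j) := by
  induction k with
  | zero => simp [affTraj, trajC]
  | succ k ih =>
    have hstep : ∀ j ∈ Finset.range k,
        (trajM A B E P Ym (k + 1) j).mulVec (s j) =
          A.mulVec ((trajM A B E P Ym k j).mulVec (s j)) +
            B.mulVec ((P k j).mulVec (s j)) := by
      intro j hj
      have hj' : j ≠ k := by simpa using (Finset.mem_range.mp hj).ne
      rw [trajM, if_neg hj', Matrix.add_mulVec, Matrix.mulVec_mulVec, Matrix.mulVec_mulVec]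
    rw [Finset.sum_range_succ, Finset.sum_congr rfl hstep]
    show A.mulVec (affTraj A B E p P Ym yv x s k) + B.mulVec (affInput p P s k) +
        E.mulVec ((Ym k).mulVec (s k) + yv k) = _
    rw [ih, affInput]
    simp only [trajC, trajM, if_pos rfl, Matrix.mulVec_add, mulVec_sum,
      Matrix.mulVec_mulVec, Finset.sum_add_distrib, ↓reduceIte]
    abel

end SuccAux

/-- suppose every element of `F` has the form `(x, Y𝕊 + y)` with `x ∈ X`
and `(Y, y) ∈ 𝕐`, and `F` is adjustable positive invariant for the closed loop
`u = K x + b` with the successor uncertainty set equal to the current one.  If `N ≥ 1`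
and `x` is affinely feasible with witness `(p, P, Ym, yv)`, then for every `s0 ∈ 𝕊` the
successor state `A x + B p_0 + E (Y_0 s0 + y_0)` is affinely feasible as well. -/
theorem successor_affFeasible {nx nu nw ns l : ℕ}
    (A : Matrix (Fin nx) (Fin nx) ℝ) (B : Matrix (Fin nx) (Fin nu) ℝ)
    (E : Matrix (Fin nx) (Fin nw) ℝ)
    (X : Set (Fin nx → ℝ)) (U : Set (Fin nu → ℝ))
    (G : Matrix (Fin l) (Fin ns) ℝ) (gv : Fin l → ℝ)
    (Ys : Set (Matrix (Fin nw) (Fin ns) ℝ × (Fin nw → ℝ)))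
    (F : Set ((Fin nx → ℝ) × Set (Fin nw → ℝ)))
    (K : Matrix (Fin nu) (Fin nx) ℝ) (b : Fin nu → ℝ)
    (hS : (poly G gv).Nonempty)
    (hF1 : ∀ q ∈ F, q.1 ∈ X ∧
      ∃ (Y : Matrix (Fin nw) (Fin ns) ℝ) (y : Fin nw → ℝ),
        (Y, y) ∈ Ys ∧ q.2 = affSet Y y (poly G gv))
    (hF2 : ∀ (x : Fin nx → ℝ) (Y : Matrix (Fin nw) (Fin ns) ℝ) (y : Fin nw → ℝ),
      (Y, y) ∈ Ys → (x, affSet Y y (poly G gv)) ∈ F →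
      K.mulVec x + b ∈ U ∧
      ∀ s ∈ poly G gv,
        ((A + B * K).mulVec x + B.mulVec b + E.mulVec (Y.mulVec s + y),
          affSet Y y (poly G gv)) ∈ F)
    (N : ℕ) (hN : 1 ≤ N) (x : Fin nx → ℝ)
    (p : ℕ → Fin nu → ℝ) (P : ℕ → ℕ → Matrix (Fin nu) (Fin ns) ℝ)
    (Ym : ℕ → Matrix (Fin nw) (Fin ns) ℝ) (yv : ℕ → Fin nw → ℝ)
    (hsol : AffSol A B E X U (poly G gv) Ys F N x p P Ym yv) :
    ∀ s0 ∈ poly G gv,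
      AffFeasible A B E X U (poly G gv) Ys F N
        (A.mulVec x + B.mulVec (p 0) + E.mulVec ((Ym 0).mulVec s0 + yv 0)) := by
  intro s0 hs0
  obtain ⟨M, rfl⟩ : ∃ M, N = M + 1 := ⟨N - 1, by omega⟩
  obtain ⟨hYs, hcon⟩ := hsol
  set x' := A.mulVec x + B.mulVec (p 0) + E.mulVec ((Ym 0).mulVec s0 + yv 0) with hx'
  set pSh : ℕ → Fin nu → ℝ := fun k => p (k + 1) + (P (k + 1) 0).mulVec s0 with hpSh
  set PSh : ℕ → ℕ → Matrix (Fin nu) (Fin ns) ℝ := fun k j => P (k + 1) (j + 1) with hPSh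
  set Ym' : ℕ → Matrix (Fin nw) (Fin ns) ℝ := fun k => Ym (min (k + 1) M) with hYm'
  set yv' : ℕ → Fin nw → ℝ := fun k => yv (min (k + 1) M) with hyv'
  set p' : ℕ → Fin nu → ℝ := fun k =>
    if k = M then K.mulVec (SuccAux.trajC A B E pSh yv' x' M) + b else pSh k with hp'
  set P' : ℕ → ℕ → Matrix (Fin nu) (Fin ns) ℝ := fun k j =>
    if k = M then K * SuccAux.trajM A B E PSh Ym' M j else PSh k j with hP'
  refine ⟨p', P', Ym', yv', fun k hk => hYs (min (k + 1) M) (by omega), ?_⟩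
  intro s' hs'
  -- the extended primitive sequence
  set s : ℕ → Fin ns → ℝ := fun k => match k with | 0 => s0 | k + 1 => s' k with hs
  have hsS : ∀ k, k < M + 1 → s k ∈ poly G gv := by
    intro k hk
    match k with
    | 0 => exact hs0
    | k + 1 => exact hs' k (by omega)
  obtain ⟨hstage, hterm⟩ := hcon s hsS
  have hterm' : (affTraj A B E p P Ym yv x s (M + 1), affSet (Ym M) (yv M) (poly G gv)) ∈ F := by
    simpa using hterm
  have hYmM : (Ym M, yv M) ∈ Ys := hYs M (by omega)
  -- input equality below the last stage
  have hinp : ∀ k, k < M → affInput p' P' s' k = affInput p P s (k + 1) := by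
    intro k hk
    rw [affInput, affInput, Finset.sum_range_succ']
    simp only [hp', hP', if_neg hk.ne, hpSh, hPSh]
    abel
  -- trajectory shift
  have htraj : ∀ k, k ≤ M →
      affTraj A B E p' P' Ym' yv' x' s' k = affTraj A B E p P Ym yv x s (k + 1) := by
    intro k hk
    induction k with
    | zero => simp [affTraj, affInput, hx']; rfl
    | succ k ih =>
      have hkM : k < M := by omega
      show A.mulVec (affTraj A B E p' P' Ym' yv' x' s' k) + B.mulVec (affInput p' P' s' k) +
          E.mulVec ((Ym' k).mulVec (s' k) + yv' k) = _
      rw [ih (by omega), hinp k hkM]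
      have h1 : Ym' k = Ym (k + 1) := by
        simp [hYm', Nat.min_eq_left (by omega : k + 1 ≤ M)]
      have h2 : yv' k = yv (k + 1) := by
        simp [hyv', Nat.min_eq_left (by omega : k + 1 ≤ M)]
      rw [h1, h2]
      rfl
  have hpP : ∀ k, k < M → p' k = pSh k := fun k hk => by simp [hp', hk.ne]
  have hPP : ∀ k, k < M → P' k = PSh k := fun k hk => by simp [hP', hk.ne]
  -- the last-stage input is the terminal feedback law
  have hsum : ∀ j ∈ Finset.range M, (SuccAux.trajM A B E P' Ym' M j).mulVec (s' j) =
      (SuccAux.trajM A B E PSh Ym' M j).mulVec (s' j) := by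
    intro j hj
    rw [SuccAux.trajM_congr hPP j]
  have hu : affInput p' P' s' M =
      K.mulVec (affTraj A B E p' P' Ym' yv' x' s' M) + b := by
    rw [SuccAux.affTraj_eq, SuccAux.trajC_congr hpP, Finset.sum_congr rfl hsum, affInput]
    simp only [hp', hP', if_pos rfl, Matrix.mulVec_add, SuccAux.mulVec_sum,
      Matrix.mulVec_mulVec]
    abel
  have hlastx : affTraj A B E p' P' Ym' yv' x' s' M = affTraj A B E p P Ym yv x s (M + 1) :=
    htraj M le_rfl
  have hF2' := hF2 (affTraj A B E p P Ym yv x s (M + 1)) (Ym M) (yv M) hYmM hterm'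
  constructor
  · intro k hk
    rcases Nat.lt_or_ge k M with hkM | hkM
    · constructor
      · rw [htraj k hkM.le]
        exact (hstage (k + 1) (by omega)).1
      · rw [hinp k hkM]
        exact (hstage (k + 1) (by omega)).2
    · have hkM : k = M := by omega
      subst hkM
      constructor
      · rw [hlastx]
        exact (hF1 _ hterm').1
      · rw [hu, hlastx]
        exact hF2'.1
  · -- terminal condition
    have hsucc := hF2'.2 (s' M) (hs' M (by omega))
    have hY : Ym' M = Ym M := by simp [hYm']
    have hyvM : yv' M = yv M := by simp [hyv']
    have hxeq : affTraj A B E p' P' Ym' yv' x' s' (M + 1) =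
        (A + B * K).mulVec (affTraj A B E p P Ym yv x s (M + 1)) + B.mulVec b +
          E.mulVec ((Ym M).mulVec (s' M) + yv M) := by
      show A.mulVec (affTraj A B E p' P' Ym' yv' x' s' M) + B.mulVec (affInput p' P' s' M) +
          E.mulVec ((Ym' M).mulVec (s' M) + yv' M) = _
      rw [hu, hlastx, hY, hyvM, Matrix.add_mulVec, Matrix.mulVec_add,
        ← Matrix.mulVec_mulVec]
      abel
    rw [hxeq]
    simpa [hY, hyvM] using hsucc
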